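/- Suppose dist is a metric on a set of clusterings, F* is a fair clustering minimizing dist(D, ·) over all fair clusterings, T satisfies dist(D, T) ≤ α · dist(D, T*) where T* minimizes dist(D, ·) over a class containing all fair clusterings (so dist(D, T*) ≤ dist(D, F*)), and F satisfies dist(T, F) ≤ β · dist(T, C*) where C* minimizes dist(T, ·) over fair clusterings (so dist(T, C*) ≤ dist(T, F*)). Then dist(D, F) ≤ (α + β + αβ) · dist(D, F*). -/
import Mathlib

/-- Combining an `α`-approximate balancing step with a `β`-approximate fairing step
gives an `(α + β + αβ)`-approximation. -/
theorem stmt_5 (X : Type*) (dist : X → X → ℝ)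
    (hnonneg : ∀ a b, 0 ≤ dist a b) (hsymm : ∀ a b, dist a b = dist b a)
    (htri : ∀ a b c, dist a c ≤ dist a b + dist b c)
    (D T F Fstar : X) (α β : ℝ) (hα : 1 ≤ α) (hβ : 1 ≤ β)
    (hT : dist D T ≤ α * dist D Fstar)
    (hF : dist T F ≤ β * dist T Fstar) :
    dist D F ≤ (α + β + α * β) * dist D Fstar := by
  have h1 := htri D T F
  have h2 := htri T D Fstar
  have h3 := hsymm T D
  have h4 := hnonneg D Fstar
  nlinarith [hnonneg T F, hnonneg D T]
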